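/- Let α, β, κ, μ be order-preserving bijections of a totally ordered set with α²βα²β²α⁻¹β² = id, μ = α⁻¹β⁻², κ^{p−18q} = α⁻²βα⁻¹. If a point x satisfies xκ^{p−18q} = x, x < xα, then successively: xα < xβ, x < xβ, x < xβ², and hence x < xμ⁻¹ (equivalently xμ < x). -/
import Mathlib

/-- Computation from Lemma `lem:ka`: order-preserving bijections of a totally
ordered set with the pretzel relations; if `xκ^{p−18q} = x` and `x < xα`,
then successively `xα < xβ`, `x < xβ`, `x < xβ²`, and hence `xμ < x`. -/
theorem lem_ka_computation {P : Type*} [LinearOrder P]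
    (κ α β μ : P ≃o P) (p q : ℤ)
    -- the relation α²βα²β²α⁻¹β² = 1, read as a right action
    (hrel : ∀ x : P, β (β (α.symm (β (β (α (α (β (α (α x))))))))) = x)
    -- μ = α⁻¹β⁻²
    (hμ : ∀ x : P, μ x = β.symm (β.symm (α.symm x)))
    -- κ^{p-18q} = α⁻²βα⁻¹
    (hκ : ∀ x : P, (κ ^ (p - 18 * q)) x = α.symm (β (α.symm (α.symm x))))
    (x : P) (hfix : (κ ^ (p - 18 * q)) x = x) (hxα : x < α x) :
    α x < β x ∧ x < β x ∧ x < β (β x) ∧ μ x < x := by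
  have h1 : α.symm (β (α.symm (α.symm x))) = x := by rw [← hκ, hfix]
  have h2 : β (α.symm (α.symm x)) = α x := by
    have := congrArg α h1; simpa using this
  have hax : α.symm x < x := by
    have := α.symm.strictMono hxα; simpa using this
  have haa : α.symm (α.symm x) < x := lt_trans (α.symm.strictMono hax) hax
  have h3 : α x < β x := by
    have := β.strictMono haa; rwa [h2] at this
  have h4 : x < β x := lt_trans hxα h3
  have h5 : x < β (β x) := lt_trans h4 (β.strictMono h4)
  have h6 : α.symm x < β (β x) := lt_trans hax h5
  have h7 : μ x < x := by
    have := β.symm.strictMono (β.symm.strictMono h6)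
    simpa [hμ] using this
  exact ⟨h3, h4, h5, h7⟩
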